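/- Let T be the tensor of order 4 and dimension 2 with entries T_{1122} = T_{2211} = 1 and all other entries zero (a CPS tensor). Then: (1) for every z in ℂ² with ‖z‖ = 1, |conj(z_1)² z_2² + conj(z_2)² z_1²| ≤ 1/2; (2) for every λ in ℝ and every z in ℂ² with ‖z‖ = 1, ‖T − λ conj(z)⊗conj(z)⊗z⊗z‖² ≥ 7/4; and (3) ‖T − e_1⊗e_1⊗e_2⊗e_2‖² = 1, where e_1, e_2 are the standard unit vectors of ℂ². Hence the infimum of ‖T − X‖ over rank-one CPS tensors X is strictly larger than the infimum of ‖T − X‖ over rank-one complex tensors X. -/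

import Mathlib

open scoped BigOperators
open ComplexConjugate

/-- The rank of a complex tensor of order 4 and dimension 2 (two-block index form):
the smallest `r` such that `T` is a sum of `r` rank-one tensors `a⊗b⊗c⊗d`. -/
noncomputable def tRank {n d : ℕ} (T : (Fin d → Fin n) → (Fin d → Fin n) → ℂ) : ℕ :=
  sInf {r : ℕ | ∃ a b : Fin r → Fin d → Fin n → ℂ,
    ∀ i j, T i j = ∑ s, (∏ k, a s k (i k)) * ∏ k, b s k (j k)}

/-- The order-4, dimension-2 tensor with `T_{1122} = T_{2211} = 1`, other entries zero. -/
def T12 : (Fin 2 → Fin 2) → (Fin 2 → Fin 2) → ℂ := fun p q =>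
  if (p 0 = 0 ∧ p 1 = 0 ∧ q 0 = 1 ∧ q 1 = 1) ∨
     (p 0 = 1 ∧ p 1 = 1 ∧ q 0 = 0 ∧ q 1 = 0) then 1 else 0

/-- The rank-one CPS tensor `λ conj(z) ⊗ conj(z) ⊗ z ⊗ z`. -/
def rk1CPS (l : ℝ) (z : Fin 2 → ℂ) : (Fin 2 → Fin 2) → (Fin 2 → Fin 2) → ℂ :=
  fun p q => (l : ℂ) * ((∏ k, conj (z (p k))) * ∏ k, z (q k))

/-- The standard unit vectors of `ℂ²`. -/
def e1 : Fin 2 → ℂ := fun i => if i = 0 then 1 else 0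
def e2 : Fin 2 → ℂ := fun i => if i = 1 then 1 else 0

/-- The rank-one tensor `e₁ ⊗ e₁ ⊗ e₂ ⊗ e₂`. -/
def E12 : (Fin 2 → Fin 2) → (Fin 2 → Fin 2) → ℂ :=
  fun p q => e1 (p 0) * e1 (p 1) * e2 (q 0) * e2 (q 1)

lemma sum_pi2 (f : (Fin 2 → Fin 2) → ℝ) :
    ∑ p, f p = f ![0,0] + f ![0,1] + f ![1,0] + f ![1,1] := by
  have h : ∀ x y : Fin 2, Fin.cons x (Fin.cons y finZeroElim) = ![x,y] := by
    intro x y; funext i; fin_cases i <;> rfl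
  rw [← (piFinTwoEquiv fun _ => Fin 2).symm.sum_comp, Fintype.sum_prod_type]
  simp [Fin.sum_univ_two, piFinTwoEquiv, h]
  abel

lemma expand (l : ℝ) (z : Fin 2 → ℂ) :
    (∑ p : Fin 2 → Fin 2, ∑ q : Fin 2 → Fin 2, Complex.normSq (T12 p q - rk1CPS l z p q))
    = 2 - 4*l*(((z 0).re^2-(z 0).im^2)*((z 1).re^2-(z 1).im^2)
          + 4*(z 0).re*(z 0).im*(z 1).re*(z 1).im)
      + l^2*((z 0).re^2+(z 0).im^2+(z 1).re^2+(z 1).im^2)^4 := by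
  simp only [sum_pi2]
  simp [T12, rk1CPS, Fin.prod_univ_two, Matrix.cons_val_zero, Matrix.cons_val_one,
    Matrix.head_cons, Fin.one_eq_zero_iff, Fin.zero_eq_one_iff,
    Complex.normSq_apply, Complex.sub_re, Complex.sub_im, Complex.mul_re, Complex.mul_im,
    Complex.conj_re, Complex.conj_im, Complex.ofReal_re, Complex.ofReal_im,
    Complex.one_re, Complex.one_im, Complex.zero_re, Complex.zero_im]
  ring

lemma aux (l s t u v : ℝ) (hs : 0 ≤ s) (ht : 0 ≤ t) (huv : u^2+v^2 = s^2*t^2) :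
    7/4 ≤ 2 - 4*l*u + l^2*(s+t)^4 := by
  rcases eq_or_lt_of_le (by positivity : (0:ℝ) ≤ s + t) with h | h
  · have hs0 : s = 0 := by linarith
    have ht0 : t = 0 := by linarith
    rw [hs0, ht0] at huv ⊢
    have hu2 : u^2 = 0 := by nlinarith [sq_nonneg v]
    have hu : u = 0 := pow_eq_zero_iff two_ne_zero |>.mp hu2
    rw [hu]
    nlinarith [sq_nonneg l]
  · have hn : 0 < (s+t)^4 := by positivity
    nlinarith [sq_nonneg (l*(s+t)^4 - 2*u), sq_nonneg v, hn,
      mul_nonneg (sq_nonneg (s-t)) (by positivity : (0:ℝ) ≤ (s+t)^2 + 4*(s*t)),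
      mul_nonneg hs ht]

lemma bound74 (l : ℝ) (z : Fin 2 → ℂ) :
    7/4 ≤ ∑ p : Fin 2 → Fin 2, ∑ q : Fin 2 → Fin 2,
        Complex.normSq (T12 p q - rk1CPS l z p q) := by
  rw [expand]
  generalize (z 0).re = a
  generalize (z 0).im = b
  generalize (z 1).re = c
  generalize (z 1).im = d
  have h := aux l (a^2+b^2) (c^2+d^2)
    ((a^2-b^2)*(c^2-d^2) + 4*a*b*c*d)
    (2*c*d*(a^2-b^2) - 2*a*b*(c^2-d^2))
    (by positivity) (by positivity) (by ring)
  calc (7:ℝ)/4 ≤ _ := h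
    _ = 2 - 4*l*((a^2-b^2)*(c^2-d^2) + 4*a*b*c*d) + l^2*(a^2+b^2+c^2+d^2)^4 := by ring

lemma part3 : (∑ p : Fin 2 → Fin 2, ∑ q : Fin 2 → Fin 2,
    Complex.normSq (T12 p q - E12 p q)) = 1 := by
  simp only [sum_pi2]
  simp [T12, E12, e1, e2, Matrix.cons_val_zero, Matrix.cons_val_one, Matrix.head_cons,
    Fin.one_eq_zero_iff, Fin.zero_eq_one_iff]

lemma rankE12 : tRank E12 = 1 := by
  unfold tRank
  set S := {r : ℕ | ∃ a b : Fin r → Fin 2 → Fin 2 → ℂ,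
    ∀ i j, E12 i j = ∑ s, (∏ k, a s k (i k)) * ∏ k, b s k (j k)} with hS
  have h1 : 1 ∈ S := by
    refine ⟨fun _ _ => e1, fun _ _ => e2, fun i j => ?_⟩
    simp [E12, Fin.prod_univ_two]
    ring
  have h0 : 0 ∉ S := by
    rintro ⟨a, b, h⟩
    have := h ![0,0] ![1,1]
    simp [E12, e1, e2, Matrix.cons_val_zero, Matrix.cons_val_one, Matrix.head_cons] at this
  refine le_antisymm (Nat.sInf_le h1) ?_
  rcases Nat.eq_zero_or_pos (sInf S) with h | h
  · exact absurd (h ▸ Nat.sInf_mem ⟨1, h1⟩) h0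
  · exact h

theorem stmt12 :
    (∀ z : Fin 2 → ℂ, (∑ i, Complex.normSq (z i)) = 1 →
      ‖(conj (z 0)) ^ 2 * (z 1) ^ 2 + (conj (z 1)) ^ 2 * (z 0) ^ 2‖ ≤ 1 / 2) ∧
    (∀ (l : ℝ) (z : Fin 2 → ℂ), (∑ i, Complex.normSq (z i)) = 1 →
      7 / 4 ≤ ∑ p : Fin 2 → Fin 2, ∑ q : Fin 2 → Fin 2,
        Complex.normSq (T12 p q - rk1CPS l z p q)) ∧
    (∑ p : Fin 2 → Fin 2, ∑ q : Fin 2 → Fin 2,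
        Complex.normSq (T12 p q - E12 p q)) = 1 ∧
    sInf {v : ℝ | ∃ X : (Fin 2 → Fin 2) → (Fin 2 → Fin 2) → ℂ, tRank X = 1 ∧
        v = Real.sqrt (∑ p : Fin 2 → Fin 2, ∑ q : Fin 2 → Fin 2,
          Complex.normSq (T12 p q - X p q))}
      < sInf {v : ℝ | ∃ (l : ℝ) (z : Fin 2 → ℂ), l ≠ 0 ∧
        v = Real.sqrt (∑ p : Fin 2 → Fin 2, ∑ q : Fin 2 → Fin 2,
          Complex.normSq (T12 p q - rk1CPS l z p q))} := by
  refine ⟨?_, fun l z _ => bound74 l z, part3, ?_⟩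
  · intro z hz
    rw [Fin.sum_univ_two] at hz
    have h1 : ‖(conj (z 0))^2 * (z 1)^2‖
        = Complex.normSq (z 0) * Complex.normSq (z 1) := by
      rw [norm_mul, norm_pow, norm_pow, Complex.norm_conj, Complex.sq_norm, Complex.sq_norm]
    have h2 : ‖(conj (z 1))^2 * (z 0)^2‖
        = Complex.normSq (z 1) * Complex.normSq (z 0) := by
      rw [norm_mul, norm_pow, norm_pow, Complex.norm_conj, Complex.sq_norm, Complex.sq_norm]
    calc ‖(conj (z 0)) ^ 2 * (z 1) ^ 2 + (conj (z 1)) ^ 2 * (z 0) ^ 2‖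
        ≤ ‖(conj (z 0))^2 * (z 1)^2‖ + ‖(conj (z 1))^2 * (z 0)^2‖ :=
          norm_add_le _ _
      _ ≤ 1/2 := by
          rw [h1, h2]
          nlinarith [sq_nonneg (Complex.normSq (z 0) - Complex.normSq (z 1))]
  · have hL : sInf {v : ℝ | ∃ X : (Fin 2 → Fin 2) → (Fin 2 → Fin 2) → ℂ, tRank X = 1 ∧
        v = Real.sqrt (∑ p : Fin 2 → Fin 2, ∑ q : Fin 2 → Fin 2,
          Complex.normSq (T12 p q - X p q))} ≤ 1 := by
      apply csInf_le
      · exact ⟨0, by rintro v ⟨X, _, rfl⟩; exact Real.sqrt_nonneg _⟩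
      · exact ⟨E12, rankE12, by rw [part3, Real.sqrt_one]⟩
    have hR : Real.sqrt (7/4) ≤ sInf {v : ℝ | ∃ (l : ℝ) (z : Fin 2 → ℂ), l ≠ 0 ∧
        v = Real.sqrt (∑ p : Fin 2 → Fin 2, ∑ q : Fin 2 → Fin 2,
          Complex.normSq (T12 p q - rk1CPS l z p q))} := by
      apply le_csInf
      · exact ⟨_, 1, 0, one_ne_zero, rfl⟩
      · rintro v ⟨l, z, _, rfl⟩
        exact Real.sqrt_le_sqrt (bound74 l z)
    have h17 : (1:ℝ) < Real.sqrt (7/4) := by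
      rw [show (1:ℝ) = Real.sqrt 1 by rw [Real.sqrt_one]]
      exact Real.sqrt_lt_sqrt (by norm_num) (by norm_num)
    linarith
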